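/- arXiv:1410.7217 — 7 statements merged into one kernel-verified Lean document; each statement's English description precedes it below -/
import Mathlib

section
/- Let Z, M, R be vectors in R^n with Z^T Z > 0 and Z^T Z · M^T M − (Z^T M)^2 > 0. For fixed σ1, σ2 > 0 and δ ∈ (−1,1), let Σ be the 2×2 matrix with entries σ1², δσ1σ2, δσ1σ2, σ2². Then the maximizer of the log-likelihood ℓ(Θ) = −tr((Y − XΘ)Σ^{−1}(Y − XΘ)^T), where Y = (M R), X = (Z M), and Θ is a 2×2 matrix with Θ_{21} = 0, is given by Θ̂_{11} = Â = Z^T M / Z^T Z, Θ̂_{12} = Ĉ = (M^T M · Z^T R − Z^T M · M^T R)/(Z^T Z · M^T M − (Z^T M)^2) + δσ2 Z^T M/(σ1 Z^T Z), and Θ̂_{22} = B̂ = (Z^T Z · M^T R − Z^T M · Z^T R)/(Z^T Z · M^T M − (Z^T M)^2) − δσ2/σ1. -/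
open Matrix

/-- The objective as a scalar polynomial in the three free entries of `Θ`. -/
def zlG (s1 s2 s3 s4 s5 s6 σ1 σ2 δ a b c : ℝ) : ℝ :=
  σ2^2*(s4 - 2*a*s2 + a*a*s1)
    - 2*(δ*σ1*σ2)*(s5 - c*s2 - b*s4 - a*s3 + a*c*s1 + a*b*s2)
    + σ1^2*(s6 + c*c*s1 + b*b*s4 - 2*c*s3 - 2*b*s5 + 2*b*c*s2)

theorem zl_trace_quad {n : ℕ} (A : Matrix (Fin n) (Fin 2) ℝ) (C : Matrix (Fin 2) (Fin 2) ℝ) :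
    Matrix.trace (A * C * Aᵀ) =
      ∑ i, (C 0 0 * (A i 0 * A i 0) + C 0 1 * (A i 0 * A i 1)
        + C 1 0 * (A i 1 * A i 0) + C 1 1 * (A i 1 * A i 1)) := by
  simp only [Matrix.trace, Matrix.diag, Matrix.mul_apply, Fin.sum_univ_two,
    Matrix.transpose_apply]
  exact Finset.sum_congr rfl fun i _ => by ring

theorem zl_split {n : ℕ} (Z M R : Fin n → ℝ) (f1 f2 f3 f4 f5 f6 : ℝ) :
    ∑ i, (f1*(Z i*Z i) + f2*(Z i*M i) + f3*(Z i*R i) + f4*(M i*M i) + f5*(M i*R i)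
        + f6*(R i*R i)) =
      f1*(∑ i, Z i*Z i) + f2*(∑ i, Z i*M i) + f3*(∑ i, Z i*R i) + f4*(∑ i, M i*M i)
        + f5*(∑ i, M i*R i) + f6*(∑ i, R i*R i) := by
  simp [Finset.sum_add_distrib, Finset.mul_sum]

theorem zl_ell {n : ℕ} (Z M R : Fin n → ℝ) (σ1 σ2 δ a b c : ℝ)
    (A : Matrix (Fin n) (Fin 2) ℝ)
    (hA0 : ∀ i, A i 0 = M i - Z i * a)
    (hA1 : ∀ i, A i 1 = R i - (Z i * c + M i * b)) :
    Matrix.trace (A * !![σ2^2, -(δ*σ1*σ2); -(δ*σ1*σ2), σ1^2] * Aᵀ) =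
      zlG (∑ i, Z i*Z i) (∑ i, Z i*M i) (∑ i, Z i*R i) (∑ i, M i*M i) (∑ i, M i*R i)
        (∑ i, R i*R i) σ1 σ2 δ a b c := by
  rw [zl_trace_quad]
  calc ∑ i, (!![σ2^2, -(δ*σ1*σ2); -(δ*σ1*σ2), σ1^2] 0 0 * (A i 0 * A i 0)
        + !![σ2^2, -(δ*σ1*σ2); -(δ*σ1*σ2), σ1^2] 0 1 * (A i 0 * A i 1)
        + !![σ2^2, -(δ*σ1*σ2); -(δ*σ1*σ2), σ1^2] 1 0 * (A i 1 * A i 0)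
        + !![σ2^2, -(δ*σ1*σ2); -(δ*σ1*σ2), σ1^2] 1 1 * (A i 1 * A i 1))
      = ∑ i, ((σ2^2*a^2 - 2*(δ*σ1*σ2)*(a*c) + σ1^2*c^2)*(Z i*Z i)
          + (-2*a*σ2^2 - 2*(δ*σ1*σ2)*(a*b-c) + 2*b*c*σ1^2)*(Z i*M i)
          + (2*a*(δ*σ1*σ2) - 2*c*σ1^2)*(Z i*R i)
          + (σ2^2 + 2*b*(δ*σ1*σ2) + σ1^2*b^2)*(M i*M i)
          + (-2*(δ*σ1*σ2) - 2*b*σ1^2)*(M i*R i)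
          + σ1^2*(R i*R i)) := by
        refine Finset.sum_congr rfl fun i _ => ?_
        rw [hA0 i, hA1 i]
        norm_num [Matrix.cons_val_zero, Matrix.cons_val_one, Matrix.head_cons]
        ring
    _ = _ := by rw [zl_split]; simp only [zlG]; ring

set_option maxHeartbeats 4000000 in
theorem zl_key (s1 s2 s3 s4 s5 s6 σ1 σ2 δ a b c ah bh ch : ℝ)
    (hs1 : s1 ≠ 0) (hD : s1*s4 - s2^2 ≠ 0) (hσ1 : σ1 ≠ 0)
    (hah : ah = s2/s1)
    (hch : ch = (s4*s3-s2*s5)/(s1*s4-s2^2) + δ*σ2*s2/(σ1*s1))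
    (hbh : bh = (s1*s5-s2*s3)/(s1*s4-s2^2) - δ*σ2/σ1) :
    zlG s1 s2 s3 s4 s5 s6 σ1 σ2 δ a b c - zlG s1 s2 s3 s4 s5 s6 σ1 σ2 δ ah bh ch
      = (1/s1)*((σ2*s1*(a-ah) - δ*σ1*((c-ch)*s1+(b-bh)*s2))^2
          + (1-δ^2)*σ1^2*((c-ch)*s1+(b-bh)*s2)^2
          + σ1^2*(b-bh)^2*(s1*s4-s2^2)) := by
  subst hah hch hbh
  simp only [zlG]
  field_simp
  ring_nf
  field_simp
  ring

set_option maxHeartbeats 4000000 in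
/-- Theorem 1 of Zhao–Luo: the constrained MLE of the single-level mediation SEM
with known error covariance `Σ = [[σ1², δσ1σ2],[δσ1σ2, σ2²]]`. -/
theorem stmt_0 {n : ℕ} (Z M R : Fin n → ℝ) (σ1 σ2 δ : ℝ)
    (hσ1 : 0 < σ1) (hσ2 : 0 < σ2) (hδ : δ ∈ Set.Ioo (-1 : ℝ) 1)
    (hZZ : 0 < ∑ i, Z i * Z i)
    (hD : 0 < (∑ i, Z i * Z i) * (∑ i, M i * M i) - (∑ i, Z i * M i) ^ 2)
    (Sig : Matrix (Fin 2) (Fin 2) ℝ)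
    (hSig : Sig = !![σ1 ^ 2, δ * σ1 * σ2; δ * σ1 * σ2, σ2 ^ 2])
    (Y X : Matrix (Fin n) (Fin 2) ℝ)
    (hY : Y = Matrix.of fun i j => if j = 0 then M i else R i)
    (hX : X = Matrix.of fun i j => if j = 0 then Z i else M i)
    (ℓ : Matrix (Fin 2) (Fin 2) ℝ → ℝ)
    (hℓ : ℓ = fun Θ => -Matrix.trace ((Y - X * Θ) * Sig⁻¹ * (Y - X * Θ)ᵀ))
    (Θhat : Matrix (Fin 2) (Fin 2) ℝ)
    (hΘhat : Θhat =
      !![(∑ i, Z i * M i) / (∑ i, Z i * Z i),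
          ((∑ i, M i * M i) * (∑ i, Z i * R i) - (∑ i, Z i * M i) * (∑ i, M i * R i)) /
              ((∑ i, Z i * Z i) * (∑ i, M i * M i) - (∑ i, Z i * M i) ^ 2) +
            δ * σ2 * (∑ i, Z i * M i) / (σ1 * (∑ i, Z i * Z i));
          0,
          ((∑ i, Z i * Z i) * (∑ i, M i * R i) - (∑ i, Z i * M i) * (∑ i, Z i * R i)) /
              ((∑ i, Z i * Z i) * (∑ i, M i * M i) - (∑ i, Z i * M i) ^ 2) -
            δ * σ2 / σ1]) :
    Θhat 1 0 = 0 ∧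
      ∀ Θ : Matrix (Fin 2) (Fin 2) ℝ, Θ 1 0 = 0 →
        ℓ Θ ≤ ℓ Θhat ∧ (ℓ Θ = ℓ Θhat → Θ = Θhat) := by
  
  obtain ⟨hδ1, hδ2⟩ := hδ
  have hδsq : 0 < 1 - δ^2 := by nlinarith
  have hSinv : Sig⁻¹ = (σ1^2*σ2^2*(1-δ^2))⁻¹ • !![σ2^2, -(δ*σ1*σ2); -(δ*σ1*σ2), σ1^2] := by
    subst hSig
    rw [Matrix.inv_def, Matrix.adjugate_fin_two_of, Matrix.det_fin_two_of,
      Ring.inverse_eq_inv']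
    congr 1
    ring
  have hL : ∀ Θ : Matrix (Fin 2) (Fin 2) ℝ, Θ 1 0 = 0 →
      ℓ Θ = -((σ1^2*σ2^2*(1-δ^2))⁻¹ *
        zlG (∑ i, Z i*Z i) (∑ i, Z i*M i) (∑ i, Z i*R i) (∑ i, M i*M i) (∑ i, M i*R i)
          (∑ i, R i*R i) σ1 σ2 δ (Θ 0 0) (Θ 1 1) (Θ 0 1)) := by
    intro Θ h10
    have hA0 : ∀ i, (Y - X * Θ) i 0 = M i - Z i * Θ 0 0 := by
      intro i
      simp [hY, hX, Matrix.sub_apply, Matrix.mul_apply, Fin.sum_univ_two, h10]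
    have hA1 : ∀ i, (Y - X * Θ) i 1 = R i - (Z i * Θ 0 1 + M i * Θ 1 1) := by
      intro i
      simp [hY, hX, Matrix.sub_apply, Matrix.mul_apply, Fin.sum_univ_two]
    rw [hℓ]
    simp only [hSinv, Matrix.mul_smul, Matrix.smul_mul, Matrix.trace_smul, smul_eq_mul]
    rw [zl_ell Z M R σ1 σ2 δ (Θ 0 0) (Θ 1 1) (Θ 0 1) (Y - X * Θ) hA0 hA1]
  have hΘhat10 : Θhat 1 0 = 0 := by rw [hΘhat]; rfl
  refine ⟨hΘhat10, fun Θ h10 => ?_⟩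
  have hah : Θhat 0 0 = (∑ i, Z i*M i)/(∑ i, Z i*Z i) := by rw [hΘhat]; rfl
  have hch : Θhat 0 1 = ((∑ i, M i*M i)*(∑ i, Z i*R i)-(∑ i, Z i*M i)*(∑ i, M i*R i))
      /((∑ i, Z i*Z i)*(∑ i, M i*M i)-(∑ i, Z i*M i)^2)
      + δ*σ2*(∑ i, Z i*M i)/(σ1*(∑ i, Z i*Z i)) := by rw [hΘhat]; rfl
  have hbh : Θhat 1 1 = ((∑ i, Z i*Z i)*(∑ i, M i*R i)-(∑ i, Z i*M i)*(∑ i, Z i*R i))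
      /((∑ i, Z i*Z i)*(∑ i, M i*M i)-(∑ i, Z i*M i)^2) - δ*σ2/σ1 := by rw [hΘhat]; rfl
  have key := zl_key (∑ i, Z i*Z i) (∑ i, Z i*M i) (∑ i, Z i*R i) (∑ i, M i*M i)
    (∑ i, M i*R i) (∑ i, R i*R i) σ1 σ2 δ (Θ 0 0) (Θ 1 1) (Θ 0 1)
    (Θhat 0 0) (Θhat 1 1) (Θhat 0 1) hZZ.ne' hD.ne' hσ1.ne' hah hch hbh
  set s1 := ∑ i, Z i*Z i with hs1
  set s2 := ∑ i, Z i*M i with hs2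
  set GT := zlG s1 s2 (∑ i, Z i*R i) (∑ i, M i*M i) (∑ i, M i*R i)
          (∑ i, R i*R i) σ1 σ2 δ (Θ 0 0) (Θ 1 1) (Θ 0 1) with hGT
  set Gh := zlG s1 s2 (∑ i, Z i*R i) (∑ i, M i*M i) (∑ i, M i*R i)
          (∑ i, R i*R i) σ1 σ2 δ (Θhat 0 0) (Θhat 1 1) (Θhat 0 1) with hGh
  set T := (Θ 0 1 - Θhat 0 1)*s1 + (Θ 1 1 - Θhat 1 1)*s2 with hT
  set Q1 := (σ2*s1*(Θ 0 0 - Θhat 0 0) - δ*σ1*T)^2 with hQ1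
  set Q2 := (1-δ^2)*σ1^2*T^2 with hQ2
  set Q3 := σ1^2*(Θ 1 1 - Θhat 1 1)^2*(s1*(∑ i, M i*M i)-s2^2) with hQ3
  have hQ1n : 0 ≤ Q1 := sq_nonneg _
  have hQ2n : 0 ≤ Q2 := by rw [hQ2]; positivity
  have hQ3n : 0 ≤ Q3 := by rw [hQ3]; exact mul_nonneg (by positivity) hD.le
  have hdiff : ℓ Θhat - ℓ Θ = (σ1^2*σ2^2*(1-δ^2))⁻¹ * (1/s1*(Q1 + Q2 + Q3)) := by
    rw [hL Θ h10, hL Θhat hΘhat10, ← key]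
    ring
  have hεinv : (0:ℝ) < (σ1^2*σ2^2*(1-δ^2))⁻¹ := by positivity
  have hs1inv : (0:ℝ) < 1/s1 := by positivity
  constructor
  · nlinarith [mul_nonneg hεinv.le (mul_nonneg hs1inv.le
      (by linarith : (0:ℝ) ≤ Q1 + Q2 + Q3))]
  · intro heq
    rw [heq, sub_self] at hdiff
    have h0 : Q1 + Q2 + Q3 = 0 := by
      have h1 := (mul_eq_zero.mp hdiff.symm).resolve_left hεinv.ne'
      exact (mul_eq_zero.mp h1).resolve_left hs1inv.ne'
    have h3 : Q3 = 0 := by linarith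
    have h2 : Q2 = 0 := by linarith
    have h1 : Q1 = 0 := by linarith
    have hb : Θ 1 1 = Θhat 1 1 := by
      rw [hQ3] at h3
      have hsq : (Θ 1 1 - Θhat 1 1)^2 = 0 := by
        have hp : 0 < σ1^2*(s1*(∑ i, M i*M i)-s2^2) := by positivity
        nlinarith [sq_nonneg (Θ 1 1 - Θhat 1 1)]
      have := pow_eq_zero_iff (n := 2) (by norm_num) |>.mp hsq
      linarith
    have hTz : T = 0 := by
      rw [hQ2] at h2
      have hsq : T^2 = 0 := by
        have hp : (0:ℝ) < (1-δ^2)*σ1^2 := by positivity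
        exact (mul_eq_zero.mp h2).resolve_left hp.ne'
      exact pow_eq_zero_iff (n := 2) (by norm_num) |>.mp hsq
    have hc : Θ 0 1 = Θhat 0 1 := by
      rw [hT, hb, sub_self, zero_mul, add_zero] at hTz
      rcases mul_eq_zero.mp hTz with h | h
      · linarith
      · exact absurd h hZZ.ne'
    have ha : Θ 0 0 = Θhat 0 0 := by
      rw [hQ1, hTz, mul_zero, sub_zero] at h1
      have := pow_eq_zero_iff (n := 2) (by norm_num) |>.mp h1
      rcases mul_eq_zero.mp this with h | h
      · rcases mul_eq_zero.mp h with h' | h'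
        · exact absurd h' hσ2.ne'
        · exact absurd h' hZZ.ne'
      · linarith
    ext i j
    fin_cases i <;> fin_cases j <;>
      simp only [Fin.zero_eta, Fin.mk_one] <;>
      first
        | exact ha
        | exact hc
        | exact h10.trans hΘhat10.symm
        | exact hb
end

section
/- Let Z, M, R be vectors in R^n with Z^T Z > 0 and the Gram matrix of (Z, M) invertible. Define = Z^T M/Z^T Z, Ĉ' = Z^T R/Z^T Z, Ĉ(δ) and B̂(δ) as in the CMA estimator (Theorem 1). Then for every δ, the difference estimator Ĉ' − Ĉ(δ) equals the product estimator Â·B̂(δ), i.e. Z^T R/Z^T Z − Ĉ(δ) = Â B̂(δ). -/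
/-- The difference estimator `Ĉ' − Ĉ(δ)` equals the product estimator `Â·B̂(δ)` for every δ. -/
theorem stmt_2 {n : ℕ} (Z M R : Fin n → ℝ) (σ1 σ2 : ℝ) (hσ1 : 0 < σ1) (hσ2 : 0 < σ2)
    (hZZ : 0 < ∑ i, Z i * Z i)
    (hD : 0 < (∑ i, Z i * Z i) * (∑ i, M i * M i) - (∑ i, Z i * M i) ^ 2)
    (Ahat Chat' : ℝ) (Chat Bhat : ℝ → ℝ)
    (hA : Ahat = (∑ i, Z i * M i) / (∑ i, Z i * Z i))
    (hC' : Chat' = (∑ i, Z i * R i) / (∑ i, Z i * Z i))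
    (hC : Chat = fun δ =>
      ((∑ i, M i * M i) * (∑ i, Z i * R i) - (∑ i, Z i * M i) * (∑ i, M i * R i)) /
          ((∑ i, Z i * Z i) * (∑ i, M i * M i) - (∑ i, Z i * M i) ^ 2) +
        δ * σ2 * (∑ i, Z i * M i) / (σ1 * (∑ i, Z i * Z i)))
    (hB : Bhat = fun δ =>
      ((∑ i, Z i * Z i) * (∑ i, M i * R i) - (∑ i, M i * Z i) * (∑ i, Z i * R i)) /
          ((∑ i, Z i * Z i) * (∑ i, M i * M i) - (∑ i, Z i * M i) ^ 2) -
        δ * σ2 / σ1) :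
    ∀ δ : ℝ, Chat' - Chat δ = Ahat * Bhat δ := by
  intro δ
  have hMZ : (∑ i, M i * Z i) = ∑ i, Z i * M i := by
    apply Finset.sum_congr rfl; intro i _; ring
  subst hA hC' hC hB
  simp only [hMZ]
  have h1 : (∑ i, Z i * Z i) ≠ 0 := ne_of_gt hZZ
  have h2 : (∑ i, Z i * Z i) * (∑ i, M i * M i) - (∑ i, Z i * M i) ^ 2 ≠ 0 := ne_of_gt hD
  have h3 : σ1 ≠ 0 := ne_of_gt hσ1
  generalize (∑ i, Z i * Z i) = a at *
  generalize (∑ i, M i * M i) = b at *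
  generalize (∑ i, Z i * M i) = c at *
  field_simp
  ring
end

section
/- Fix σ1 > 0, and real numbers s12 and s22 with σ1² s22 − s12² > 0. For each δ ∈ (−1, 1), the system of equations Bσ1² + δσ1σ2 = s12 and B²σ1² + σ2² + 2Bδσ1σ2 = s22 in unknowns (B, σ2) with σ2 > 0 has the unique solution B = s12/σ1² − (δ/(σ1²√(1−δ²)))·√(σ1² s22 − s12²) and σ2² = (σ1² s22 − s12²)/(σ1²(1−δ²)). -/
/-- Identification of `(B, σ2)` from the reduced-form moments given δ (eqs (13)-(14)). -/
theorem stmt_4 (σ1 s12 s22 δ : ℝ) (hσ1 : 0 < σ1)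
    (hpos : 0 < σ1 ^ 2 * s22 - s12 ^ 2) (hδ : δ ∈ Set.Ioo (-1 : ℝ) 1) :
    ∀ B σ2 : ℝ, 0 < σ2 →
      ((B * σ1 ^ 2 + δ * σ1 * σ2 = s12 ∧
          B ^ 2 * σ1 ^ 2 + σ2 ^ 2 + 2 * B * δ * σ1 * σ2 = s22) ↔
        (B = s12 / σ1 ^ 2 -
            δ / (σ1 ^ 2 * Real.sqrt (1 - δ ^ 2)) * Real.sqrt (σ1 ^ 2 * s22 - s12 ^ 2) ∧
          σ2 ^ 2 = (σ1 ^ 2 * s22 - s12 ^ 2) / (σ1 ^ 2 * (1 - δ ^ 2)))) := by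
  obtain ⟨hδ1, hδ2⟩ := hδ
  have hδpos : 0 < 1 - δ ^ 2 := by nlinarith
  set S := Real.sqrt (σ1 ^ 2 * s22 - s12 ^ 2) with hSdef
  set T := Real.sqrt (1 - δ ^ 2) with hTdef
  have hS2 : S ^ 2 = σ1 ^ 2 * s22 - s12 ^ 2 := Real.sq_sqrt hpos.le
  have hT2 : T ^ 2 = 1 - δ ^ 2 := Real.sq_sqrt hδpos.le
  have hSpos : 0 < S := Real.sqrt_pos.mpr hpos
  have hTpos : 0 < T := Real.sqrt_pos.mpr hδpos
  intro B σ2 hσ2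
  -- key: if σ2² has the right value, then σ1 * σ2 * T = S
  have key : ∀ s : ℝ, 0 < s → s ^ 2 = (σ1 ^ 2 * s22 - s12 ^ 2) / (σ1 ^ 2 * (1 - δ ^ 2)) →
      σ1 * s * T = S := by
    intro s hs hseq
    have hsq : (σ1 * s * T) ^ 2 = S ^ 2 := by
      have hne : σ1 ^ 2 * (1 - δ ^ 2) ≠ 0 := by positivity
      field_simp at hseq
      nlinarith [hseq, hT2, hS2]
    have h1 : 0 ≤ σ1 * s * T := by positivity
    calc σ1 * s * T = Real.sqrt ((σ1 * s * T) ^ 2) := (Real.sqrt_sq h1).symm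
      _ = Real.sqrt (S ^ 2) := by rw [hsq]
      _ = S := Real.sqrt_sq hSpos.le
  constructor
  · rintro ⟨h1, h2⟩
    have hσ2sq : σ2 ^ 2 = (σ1 ^ 2 * s22 - s12 ^ 2) / (σ1 ^ 2 * (1 - δ ^ 2)) := by
      have hne : σ1 ^ 2 * (1 - δ ^ 2) ≠ 0 := by positivity
      have e1 : (B * σ1 ^ 2 + δ * σ1 * σ2) ^ 2 = s12 ^ 2 := by rw [h1]
      field_simp
      linear_combination σ1 ^ 2 * h2 - e1
    have hk := key σ2 hσ2 hσ2sq
    refine ⟨?_, hσ2sq⟩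
    have hσ1ne : (σ1 : ℝ) ≠ 0 := hσ1.ne'
    have hTne : T ≠ 0 := hTpos.ne'
    field_simp
    linear_combination T * h1 - δ * hk
  · rintro ⟨hB, hσ2sq⟩
    have hk := key σ2 hσ2 hσ2sq
    have hσ1ne : (σ1 : ℝ) ≠ 0 := hσ1.ne'
    have hTne : T ≠ 0 := hTpos.ne'
    have h1 : B * σ1 ^ 2 + δ * σ1 * σ2 = s12 := by
      rw [hB]; field_simp; linear_combination δ * hk
    refine ⟨h1, ?_⟩
    -- s12² + σ1²σ2²(1-δ²) = σ1² s22
    have h3 : σ2 ^ 2 * (σ1 ^ 2 * (1 - δ ^ 2)) = σ1 ^ 2 * s22 - s12 ^ 2 := by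
      rw [hσ2sq]; field_simp
    have e1 : (B * σ1 ^ 2 + δ * σ1 * σ2) ^ 2 = s12 ^ 2 := by rw [h1]
    have h2' : σ1 ^ 2 * (B ^ 2 * σ1 ^ 2 + σ2 ^ 2 + 2 * B * δ * σ1 * σ2) = σ1 ^ 2 * s22 := by
      linear_combination e1 + h3
    exact mul_left_cancel₀ (pow_ne_zero 2 hσ1ne) h2'
end

section
/- Fix σ1 > 0 and reduced-form moments s12, s22 with σ1² s22 − s12² > 0. For δ ∈ (−1,1), let B(δ) and σ2(δ) be the unique solution to Bσ1² + δσ1σ2 = s12 and B²σ1² + σ2² + 2Bδσ1σ2 = s22 with σ2 > 0. Then the map δ ↦ (B(δ), σ2(δ), δ) is injective, and (B(δ), σ2(δ)) is never constant in δ; in particular, the three parameters (B, σ2, δ) cannot all be recovered from the two equations: for any two distinct δ, δ' ∈ (−1,1), both triples (B(δ), σ2(δ), δ) and (B(δ'), σ2(δ'), δ') satisfy the same two moment equations. -/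
private lemma f_inj (δ δ' : ℝ) (h : δ ∈ Set.Ioo (-1:ℝ) 1) (h' : δ' ∈ Set.Ioo (-1:ℝ) 1)
    (heq : δ / Real.sqrt (1 - δ ^ 2) = δ' / Real.sqrt (1 - δ' ^ 2)) : δ = δ' := by
  obtain ⟨h1, h2⟩ := h
  obtain ⟨h1', h2'⟩ := h'
  have hd : (0:ℝ) < 1 - δ ^ 2 := by nlinarith
  have hd' : (0:ℝ) < 1 - δ' ^ 2 := by nlinarith
  set c := Real.sqrt (1 - δ ^ 2) with hcdef
  set c' := Real.sqrt (1 - δ' ^ 2) with hc'def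
  have hc : 0 < c := Real.sqrt_pos.2 hd
  have hc' : 0 < c' := Real.sqrt_pos.2 hd'
  have hc2 : c ^ 2 = 1 - δ ^ 2 := Real.sq_sqrt hd.le
  have hc'2 : c' ^ 2 = 1 - δ' ^ 2 := Real.sq_sqrt hd'.le
  have key : δ * c' = δ' * c := by
    field_simp at heq
    linarith [heq]
  have hsqc : (δ * c') ^ 2 = (δ' * c) ^ 2 := by rw [key]
  have hsq : δ ^ 2 = δ' ^ 2 := by
    linear_combination hsqc - δ ^ 2 * hc'2 + δ' ^ 2 * hc2
  have : δ = δ' ∨ δ = -δ' := sq_eq_sq_iff_eq_or_eq_neg.mp hsq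
  rcases this with h | h
  · exact h
  · subst h
    have hcc : c = c' := by rw [hcdef, hc'def]; ring_nf
    rw [hcc] at key
    have : δ' = 0 := by nlinarith [key, hc']
    simp [this]

/-- Nonidentifiability of δ: each δ ∈ (−1,1) yields a distinct triple `(B(δ), σ2(δ), δ)`
satisfying the same two reduced-form moment equations. -/
theorem stmt_5 (σ1 s12 s22 : ℝ) (hσ1 : 0 < σ1)
    (hpos : 0 < σ1 ^ 2 * s22 - s12 ^ 2)
    (B σ2 : ℝ → ℝ)
    (hB : B = fun δ => s12 / σ1 ^ 2 -
      δ / (σ1 ^ 2 * Real.sqrt (1 - δ ^ 2)) * Real.sqrt (σ1 ^ 2 * s22 - s12 ^ 2))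
    (hσ2 : σ2 = fun δ => Real.sqrt ((σ1 ^ 2 * s22 - s12 ^ 2) / (σ1 ^ 2 * (1 - δ ^ 2)))) :
    -- the solution map is injective
    Set.InjOn (fun δ => (B δ, σ2 δ, δ)) (Set.Ioo (-1 : ℝ) 1) ∧
    -- (B(δ), σ2(δ)) is never constant in δ
    (∀ δ ∈ Set.Ioo (-1 : ℝ) 1, ∀ δ' ∈ Set.Ioo (-1 : ℝ) 1, δ ≠ δ' →
      (B δ, σ2 δ) ≠ (B δ', σ2 δ')) ∧
    -- every δ produces a solution of the same two moment equations
    (∀ δ ∈ Set.Ioo (-1 : ℝ) 1,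
      0 < σ2 δ ∧
      B δ * σ1 ^ 2 + δ * σ1 * σ2 δ = s12 ∧
      B δ ^ 2 * σ1 ^ 2 + σ2 δ ^ 2 + 2 * B δ * δ * σ1 * σ2 δ = s22) := by
  have ht : 0 < Real.sqrt (σ1 ^ 2 * s22 - s12 ^ 2) := Real.sqrt_pos.2 hpos
  have ht2 : Real.sqrt (σ1 ^ 2 * s22 - s12 ^ 2) ^ 2 = σ1 ^ 2 * s22 - s12 ^ 2 :=
    Real.sq_sqrt hpos.le
  set t := Real.sqrt (σ1 ^ 2 * s22 - s12 ^ 2) with htdef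
  have hσ1' : (σ1:ℝ) ≠ 0 := hσ1.ne'
  refine ⟨?_, ?_, ?_⟩
  · intro δ hδ δ' hδ' heq
    simpa using congrArg (fun p => p.2.2) heq
  · intro δ hδ δ' hδ' hne heq
    apply hne
    have hBeq : B δ = B δ' := congrArg Prod.fst heq
    rw [hB] at hBeq
    simp only at hBeq
    have hd : (0:ℝ) < 1 - δ ^ 2 := by obtain ⟨a,b⟩ := hδ; nlinarith
    have hd' : (0:ℝ) < 1 - δ' ^ 2 := by obtain ⟨a,b⟩ := hδ'; nlinarith
    have hc : 0 < Real.sqrt (1 - δ ^ 2) := Real.sqrt_pos.2 hd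
    have hc' : 0 < Real.sqrt (1 - δ' ^ 2) := Real.sqrt_pos.2 hd'
    apply f_inj δ δ' hδ hδ'
    have e1 : δ / (σ1 ^ 2 * Real.sqrt (1 - δ ^ 2)) * t
        = δ' / (σ1 ^ 2 * Real.sqrt (1 - δ' ^ 2)) * t := by linarith [hBeq]
    have e2 : δ / (σ1 ^ 2 * Real.sqrt (1 - δ ^ 2))
        = δ' / (σ1 ^ 2 * Real.sqrt (1 - δ' ^ 2)) := mul_right_cancel₀ ht.ne' e1
    field_simp at e2 ⊢
    have e3 : σ1 ^ 2 * (δ * Real.sqrt (1 - δ' ^ 2)) = σ1 ^ 2 * (δ' * Real.sqrt (1 - δ ^ 2)) := by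
      linear_combination σ1 ^ 2 * e2
    linarith [mul_left_cancel₀ (pow_ne_zero 2 hσ1') e3]
  · intro δ hδ
    obtain ⟨h1, h2⟩ := hδ
    have hd : (0:ℝ) < 1 - δ ^ 2 := by nlinarith
    have hc : 0 < Real.sqrt (1 - δ ^ 2) := Real.sqrt_pos.2 hd
    have hc2 : Real.sqrt (1 - δ ^ 2) ^ 2 = 1 - δ ^ 2 := Real.sq_sqrt hd.le
    have hcne : Real.sqrt (1 - δ ^ 2) ≠ 0 := hc.ne'
    have hσ2v : σ2 δ = t / (σ1 * Real.sqrt (1 - δ ^ 2)) := by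
      rw [hσ2]
      simp only
      rw [Real.sqrt_div hpos.le, Real.sqrt_mul (sq_nonneg σ1), Real.sqrt_sq hσ1.le]
    have hσ2pos : 0 < σ2 δ := by rw [hσ2v]; positivity
    have hBv : B δ = s12 / σ1 ^ 2 - δ / (σ1 ^ 2 * Real.sqrt (1 - δ ^ 2)) * t := by rw [hB]
    have heq1 : B δ * σ1 ^ 2 + δ * σ1 * σ2 δ = s12 := by
      rw [hBv, hσ2v]
      field_simp
      ring
    refine ⟨hσ2pos, heq1, ?_⟩
    have hσ2sq : σ1 ^ 2 * (1 - δ ^ 2) * σ2 δ ^ 2 = σ1 ^ 2 * s22 - s12 ^ 2 := by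
      rw [hσ2v]
      field_simp
      linear_combination (1 - δ ^ 2) * ht2 - (σ1 ^ 2 * s22 - s12 ^ 2) * hc2
    have key : σ1 ^ 2 * (B δ ^ 2 * σ1 ^ 2 + σ2 δ ^ 2 + 2 * B δ * δ * σ1 * σ2 δ)
        = σ1 ^ 2 * s22 := by
      linear_combination (B δ * σ1 ^ 2 + δ * σ1 * σ2 δ + s12) * heq1 + hσ2sq
    exact mul_left_cancel₀ (pow_ne_zero 2 hσ1') key
end

section
/- Let V be the 3×3 matrix [[σ1²/q, δσ1σ2/q, 0],[δσ1σ2/q, σ2²(qA² + σ1² − qA²δ²)/(qσ1²), −Aσ2²(1−δ²)/σ1²],[0, −Aσ2²(1−δ²)/σ1², σ2²(1−δ²)/σ1²]] with σ1, σ2, q > 0 and δ ∈ (−1,1). Then V is symmetric positive definite. -/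
open Matrix

/-- The asymptotic covariance matrix `V` of the CMA estimator is symmetric positive definite. -/
theorem stmt_9 (A σ1 σ2 δ q : ℝ) (hσ1 : 0 < σ1) (hσ2 : 0 < σ2)
    (hδ : δ ∈ Set.Ioo (-1 : ℝ) 1) (hq : 0 < q)
    (V : Matrix (Fin 3) (Fin 3) ℝ)
    (hV : V = !![σ1 ^ 2 / q, δ * σ1 * σ2 / q, 0;
                 δ * σ1 * σ2 / q,
                   σ2 ^ 2 * (q * A ^ 2 + σ1 ^ 2 - q * A ^ 2 * δ ^ 2) / (q * σ1 ^ 2),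
                   -(A * σ2 ^ 2 * (1 - δ ^ 2)) / σ1 ^ 2;
                 0, -(A * σ2 ^ 2 * (1 - δ ^ 2)) / σ1 ^ 2,
                   σ2 ^ 2 * (1 - δ ^ 2) / σ1 ^ 2]) :
    V.IsSymm ∧ V.PosDef := by
  obtain ⟨hδ1, hδ2⟩ := hδ
  have hd : (0:ℝ) < 1 - δ ^ 2 := by nlinarith
  have hsym : V.IsSymm := by
    subst hV
    ext i j
    fin_cases i <;> fin_cases j <;> simp [Matrix.IsSymm]
  refine ⟨hsym, ?_, ?_⟩
  · exact hsym
  · intro x hx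
    have hx' : x 0 ≠ 0 ∨ x 1 ≠ 0 ∨ x 2 ≠ 0 := by
      by_contra h
      push_neg at h
      apply hx
      ext i
      fin_cases i <;> simp [h.1, h.2.1, h.2.2]
    subst hV
    simp [Matrix.mulVec, dotProduct, Fin.sum_univ_three, Finsupp.sum_fintype]
    set a := x 0 with ha
    set b := x 1 with hb
    set c := x 2 with hc
    have key : (0:ℝ) < σ1 ^ 2 * (σ1 * a + δ * σ2 * b) ^ 2
        + σ1 ^ 2 * σ2 ^ 2 * (1 - δ ^ 2) * b ^ 2
        + q * σ2 ^ 2 * (1 - δ ^ 2) * (A * b - c) ^ 2 := by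
      rcases eq_or_ne b 0 with hb0 | hb0
      · rcases hx' with h | h | h
        · have h1 : σ1 * a + δ * σ2 * b ≠ 0 := by
            rw [hb0]; simpa using mul_ne_zero (ne_of_gt hσ1) h
          positivity
        · exact absurd hb0 h
        · have h1 : A * b - c ≠ 0 := by rw [hb0]; simpa using h
          positivity
      · positivity
    have h1 : a * (σ1 ^ 2 / q * a + δ * σ1 * σ2 / q * b) +
        b * (δ * σ1 * σ2 / q * a +
          σ2 ^ 2 * (q * A ^ 2 + σ1 ^ 2 - q * A ^ 2 * δ ^ 2) / (q * σ1 ^ 2) * b +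
          -(A * σ2 ^ 2 * (1 - δ ^ 2)) / σ1 ^ 2 * c) +
        c * (-(A * σ2 ^ 2 * (1 - δ ^ 2)) / σ1 ^ 2 * b +
          σ2 ^ 2 * (1 - δ ^ 2) / σ1 ^ 2 * c) =
        (σ1 ^ 2 * (σ1 * a + δ * σ2 * b) ^ 2
        + σ1 ^ 2 * σ2 ^ 2 * (1 - δ ^ 2) * b ^ 2
        + q * σ2 ^ 2 * (1 - δ ^ 2) * (A * b - c) ^ 2) / (q * σ1 ^ 2) := by
      field_simp
      ring
    have h2 : (0:ℝ) < (σ1 ^ 2 * (σ1 * a + δ * σ2 * b) ^ 2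
        + σ1 ^ 2 * σ2 ^ 2 * (1 - δ ^ 2) * b ^ 2
        + q * σ2 ^ 2 * (1 - δ ^ 2) * (A * b - c) ^ 2) / (q * σ1 ^ 2) := by
      positivity
    exact lt_of_lt_of_eq h2 (by rw [← h1]; ring)
end

section
/- With V as in Theorem 2 (asymptotic covariance of (Â, Ĉ, B̂)), the asymptotic variance of the product estimator of the indirect effect, obtained by the delta method applied to the function (a,c,b) ↦ a·b at the point (A, C, B), equals B²σ1²/q + A²σ2²(1−δ²)/σ1². That is, the gradient g = (B, 0, A)^T satisfies g^T V g = B²σ1²/q + A²σ2²(1−δ²)/σ1². -/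
open Matrix

/-- Delta-method variance of the product estimator: the gradient `g = (B, 0, A)ᵀ` of
`(a,c,b) ↦ a·b` at `(A,C,B)` satisfies `gᵀ V g = B²σ1²/q + A²σ2²(1−δ²)/σ1²`. -/
theorem stmt_10 (A B σ1 σ2 δ q : ℝ) (hσ1 : 0 < σ1) (hσ2 : 0 < σ2)
    (hδ : δ ∈ Set.Ioo (-1 : ℝ) 1) (hq : 0 < q)
    (V : Matrix (Fin 3) (Fin 3) ℝ)
    (hV : V = !![σ1 ^ 2 / q, δ * σ1 * σ2 / q, 0;
                 δ * σ1 * σ2 / q,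
                   σ2 ^ 2 * (q * A ^ 2 + σ1 ^ 2 - q * A ^ 2 * δ ^ 2) / (q * σ1 ^ 2),
                   -(A * σ2 ^ 2 * (1 - δ ^ 2)) / σ1 ^ 2;
                 0, -(A * σ2 ^ 2 * (1 - δ ^ 2)) / σ1 ^ 2,
                   σ2 ^ 2 * (1 - δ ^ 2) / σ1 ^ 2])
    (g : Fin 3 → ℝ) (hg : g = ![B, 0, A]) :
    g ⬝ᵥ (V *ᵥ g) = B ^ 2 * σ1 ^ 2 / q + A ^ 2 * σ2 ^ 2 * (1 - δ ^ 2) / σ1 ^ 2 := by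
  subst hV hg
  simp [dotProduct, mulVec, Fin.sum_univ_three]
  ring
end

section
/- Consider the Gaussian log-likelihood ℓ(Θ, Σ) = −n log det Σ − tr((Y − XΘ)Σ^{−1}(Y − XΘ)^T) for the model Y = XΘ + E with Y = (M R), X = (Z M), constraint Θ_{21} = 0, and Σ parametrized by (σ1, σ2, δ). Suppose the residual Gram matrix S = (Y − XΘ̂_0)^T(Y − XΘ̂_0)/n from the unconstrained fit is positive definite. Then for every fixed δ ∈ (−1, 1), the supremum of ℓ over (A, B, C, σ1², σ2²) is the same; i.e., the profile likelihood in δ is constant on (−1,1). -/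
open Matrix

/-- Key reparametrization lemma: for `δa, δb ∈ (−1,1)` and parameters
`(A, C, B, σ1, σ2)` with `σ1, σ2 > 0`, there are parameters `(A, C', B', σ1, σ2')`
achieving the same value of the Gaussian log-likelihood with correlation `δb`
instead of `δa`. -/
theorem stmt_15_key {n : ℕ} (M : Fin n → ℝ)
    (Y X : Matrix (Fin n) (Fin 2) ℝ)
    (hYX : ∀ i, Y i 0 = M i ∧ X i 1 = M i)
    (δa δb : ℝ) (hδa : δa ∈ Set.Ioo (-1 : ℝ) 1) (hδb : δb ∈ Set.Ioo (-1 : ℝ) 1)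
    (A C B σ1 σ2 : ℝ) (hσ1 : 0 < σ1) (hσ2 : 0 < σ2) :
    ∃ C' B' σ2' : ℝ, 0 < σ2' ∧
      (-(n : ℝ) * Real.log (!![σ1 ^ 2, δb * σ1 * σ2'; δb * σ1 * σ2', σ2' ^ 2] :
          Matrix (Fin 2) (Fin 2) ℝ).det -
        Matrix.trace ((Y - X * !![A, C'; 0, B']) *
          (!![σ1 ^ 2, δb * σ1 * σ2'; δb * σ1 * σ2', σ2' ^ 2] : Matrix (Fin 2) (Fin 2) ℝ)⁻¹ *
          (Y - X * !![A, C'; 0, B'])ᵀ)) =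
      (-(n : ℝ) * Real.log (!![σ1 ^ 2, δa * σ1 * σ2; δa * σ1 * σ2, σ2 ^ 2] :
          Matrix (Fin 2) (Fin 2) ℝ).det -
        Matrix.trace ((Y - X * !![A, C; 0, B]) *
          (!![σ1 ^ 2, δa * σ1 * σ2; δa * σ1 * σ2, σ2 ^ 2] : Matrix (Fin 2) (Fin 2) ℝ)⁻¹ *
          (Y - X * !![A, C; 0, B])ᵀ)) := by
  obtain ⟨ha1, ha2⟩ := hδa
  obtain ⟨hb1, hb2⟩ := hδb
  have ha : (0 : ℝ) < 1 - δa ^ 2 := by nlinarith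
  have hb : (0 : ℝ) < 1 - δb ^ 2 := by nlinarith
  obtain ⟨σ2', hσ2', hsq⟩ :
      ∃ s : ℝ, 0 < s ∧ s ^ 2 * (1 - δb ^ 2) = σ2 ^ 2 * (1 - δa ^ 2) := by
    refine ⟨σ2 * Real.sqrt ((1 - δa ^ 2) / (1 - δb ^ 2)),
      mul_pos hσ2 (Real.sqrt_pos.mpr (div_pos ha hb)), ?_⟩
    rw [mul_pow, Real.sq_sqrt (le_of_lt (div_pos ha hb))]
    field_simp
  obtain ⟨t, hts⟩ : ∃ t : ℝ, t * σ1 = δb * σ2' - δa * σ2 :=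
    ⟨(δb * σ2' - δa * σ2) / σ1, by field_simp⟩
  set T : Matrix (Fin 2) (Fin 2) ℝ := !![(1 : ℝ), t; 0, 1] with hT
  have hTt : Tᵀ = !![(1 : ℝ), 0; t, 1] := by
    rw [hT]; ext i j; fin_cases i <;> fin_cases j <;> rfl
  set Sa : Matrix (Fin 2) (Fin 2) ℝ :=
    !![σ1 ^ 2, δa * σ1 * σ2; δa * σ1 * σ2, σ2 ^ 2] with hSa
  set Sb : Matrix (Fin 2) (Fin 2) ℝ :=
    !![σ1 ^ 2, δb * σ1 * σ2'; δb * σ1 * σ2', σ2' ^ 2] with hSb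
  have hdetT : T.det = 1 := by
    rw [hT, Matrix.det_fin_two_of]; ring
  have hdetTt : (Tᵀ).det = 1 := by rw [Matrix.det_transpose, hdetT]
  have hTinv : T * T⁻¹ = 1 :=
    Matrix.mul_nonsing_inv T (by rw [hdetT]; exact isUnit_one)
  have hTtinv : Tᵀ⁻¹ * Tᵀ = 1 :=
    Matrix.nonsing_inv_mul Tᵀ (by rw [hdetTt]; exact isUnit_one)
  have hSab : Sb = Tᵀ * Sa * T := by
    rw [hTt, hSa, hSb, hT, Matrix.mul_fin_two, Matrix.mul_fin_two]
    ext i j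
    fin_cases i <;> fin_cases j <;> simp <;>
      first
        | linear_combination σ1 * hts
        | linear_combination (-σ1) * hts
        | linear_combination (t * σ1 + δb * σ2' + δa * σ2) * hts - hsq
        | linear_combination (-(t * σ1 + δb * σ2' + δa * σ2)) * hts + hsq
  refine ⟨C + A * t, B - t, σ2', hσ2', ?_⟩
  have hE : Y - X * !![A, C + A * t; 0, B - t] = (Y - X * !![A, C; 0, B]) * T := by
    rw [hT]
    ext i j
    obtain ⟨hYi, hXi⟩ := hYX i
    fin_cases j <;>
      simp [Matrix.mul_apply, Fin.sum_univ_two, Matrix.sub_apply, hYi, hXi] <;> ring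
  have hdet : Sb.det = Sa.det := by
    rw [hSa, hSb, Matrix.det_fin_two_of, Matrix.det_fin_two_of]
    linear_combination σ1 ^ 2 * hsq
  have hSbinv : Sb⁻¹ = T⁻¹ * (Sa⁻¹ * Tᵀ⁻¹) := by
    rw [hSab, Matrix.mul_inv_rev, Matrix.mul_inv_rev]
  have htrace :
      (Y - X * !![A, C + A * t; 0, B - t]) * Sb⁻¹ *
          (Y - X * !![A, C + A * t; 0, B - t])ᵀ =
        (Y - X * !![A, C; 0, B]) * Sa⁻¹ * (Y - X * !![A, C; 0, B])ᵀ := by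
    rw [hE, hSbinv, Matrix.transpose_mul]
    calc (Y - X * !![A, C; 0, B]) * T * (T⁻¹ * (Sa⁻¹ * Tᵀ⁻¹)) *
          (Tᵀ * (Y - X * !![A, C; 0, B])ᵀ)
        = (Y - X * !![A, C; 0, B]) * (T * T⁻¹) * Sa⁻¹ * ((Tᵀ⁻¹ * Tᵀ) *
            (Y - X * !![A, C; 0, B])ᵀ) := by
          simp only [Matrix.mul_assoc]
      _ = (Y - X * !![A, C; 0, B]) * Sa⁻¹ * (Y - X * !![A, C; 0, B])ᵀ := by
          rw [hTinv, hTtinv, Matrix.mul_one, Matrix.one_mul]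
  show -(n : ℝ) * Real.log Sb.det -
      Matrix.trace ((Y - X * !![A, C + A * t; 0, B - t]) * Sb⁻¹ *
        (Y - X * !![A, C + A * t; 0, B - t])ᵀ) =
    -(n : ℝ) * Real.log Sa.det -
      Matrix.trace ((Y - X * !![A, C; 0, B]) * Sa⁻¹ * (Y - X * !![A, C; 0, B])ᵀ)
  rw [htrace, hdet]

/-- Theorem 4 of Zhao–Luo (nonidentifiability of δ): the profile likelihood of the
constrained Gaussian SEM, maximized over `(A, C, B, σ1, σ2)`, is constant in `δ ∈ (−1,1)`,
provided the residual Gram matrix `S` of the unconstrained fit is positive definite. -/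
theorem stmt_15 {n : ℕ} (hn : 0 < n) (Z M R : Fin n → ℝ)
    (Y X : Matrix (Fin n) (Fin 2) ℝ)
    (hY : Y = Matrix.of fun i j => if j = 0 then M i else R i)
    (hX : X = Matrix.of fun i j => if j = 0 then Z i else M i)
    (Θ0 : Matrix (Fin 2) (Fin 2) ℝ) (hΘ0 : Θ0 = (Xᵀ * X)⁻¹ * (Xᵀ * Y))
    (S : Matrix (Fin 2) (Fin 2) ℝ)
    (hS : S = (n : ℝ)⁻¹ • ((Y - X * Θ0)ᵀ * (Y - X * Θ0)))
    (hSpd : S.PosDef)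
    (ℓ : ℝ → ℝ → ℝ → ℝ → ℝ → ℝ → ℝ)
    (hℓ : ℓ = fun A C B σ1 σ2 δ =>
      -(n : ℝ) * Real.log (!![σ1 ^ 2, δ * σ1 * σ2; δ * σ1 * σ2, σ2 ^ 2] :
          Matrix (Fin 2) (Fin 2) ℝ).det -
        Matrix.trace ((Y - X * !![A, C; 0, B]) *
          (!![σ1 ^ 2, δ * σ1 * σ2; δ * σ1 * σ2, σ2 ^ 2] : Matrix (Fin 2) (Fin 2) ℝ)⁻¹ *
          (Y - X * !![A, C; 0, B])ᵀ)) :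
    ∀ δ₁ ∈ Set.Ioo (-1 : ℝ) 1, ∀ δ₂ ∈ Set.Ioo (-1 : ℝ) 1,
      sSup {x : ℝ | ∃ A C B σ1 σ2 : ℝ, 0 < σ1 ∧ 0 < σ2 ∧ x = ℓ A C B σ1 σ2 δ₁} =
        sSup {x : ℝ | ∃ A C B σ1 σ2 : ℝ, 0 < σ1 ∧ 0 < σ2 ∧ x = ℓ A C B σ1 σ2 δ₂} := by
  intro δ₁ hδ₁ δ₂ hδ₂
  have hYX : ∀ i, Y i 0 = M i ∧ X i 1 = M i := by
    intro i; constructor <;> simp [hY, hX]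
  have key : ∀ δa ∈ Set.Ioo (-1 : ℝ) 1, ∀ δb ∈ Set.Ioo (-1 : ℝ) 1,
      {x : ℝ | ∃ A C B σ1 σ2 : ℝ, 0 < σ1 ∧ 0 < σ2 ∧ x = ℓ A C B σ1 σ2 δa} ⊆
      {x : ℝ | ∃ A C B σ1 σ2 : ℝ, 0 < σ1 ∧ 0 < σ2 ∧ x = ℓ A C B σ1 σ2 δb} := by
    intro δa hδa δb hδb x hx
    obtain ⟨A, C, B, σ1, σ2, hσ1, hσ2, hx⟩ := hx
    obtain ⟨C', B', σ2', hσ2', hval⟩ :=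
      stmt_15_key M Y X hYX δa δb hδa hδb A C B σ1 σ2 hσ1 hσ2
    exact ⟨A, C', B', σ1, σ2', hσ1, hσ2', by rw [hx, hℓ]; exact hval.symm⟩
  rw [Set.Subset.antisymm (key δ₁ hδ₁ δ₂ hδ₂) (key δ₂ hδ₂ δ₁ hδ₁)]
end
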